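/- Let β > 2 and ε > 0. Then there exist c > 0 and Λ > 0 such that for every λ ≥ Λ and every normalized eigenfunction u of the anharmonic oscillator with eigenvalue λ, one has u(x)² ≤ exp(−2c·|x|^{1+β/2}) for every x ∈ ℝ with |x| > ((1+ε)·λ)^{1/β}. -/

import Mathlib

set_option maxHeartbeats 1000000

open MeasureTheory Set

private lemma aux_not_integrable (f : ℝ → ℝ) (hf : Integrable f) (m T : ℝ) (hm : 0 < m)
    (h : ∀ t, T ≤ t → m ≤ f t) : False := by
  have h1 : IntegrableOn f (Ici T) := hf.integrableOn
  have h2 : IntegrableOn (fun _ => m) (Ici T) := by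
    refine h1.mono' aestronglyMeasurable_const ?_
    filter_upwards [ae_restrict_mem measurableSet_Ici] with t ht
    rw [Real.norm_eq_abs, abs_of_pos hm]
    exact h t ht
  rw [integrableOn_const_iff] at h2
  rcases h2 with h2 | h2
  · exact absurd (by simpa using h2 : m = 0) (ne_of_gt hm)
  · rw [Real.volume_Ici] at h2; exact absurd h2 (by simp)

private lemma arith_gap (ρ a a0 : ℝ) (h : a0 = ρ * a) (h1 : 2 * ρ ≤ a0 * (1 - ρ))
    (hρ : 0 < ρ) : a0 + 2 ≤ a := by nlinarith

private lemma arith_W (ε lam T : ℝ) (hε : 0 < ε)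
    (hlam : 0 < lam) (h1 : (1 + ε / 2) * lam ≤ T) : ε / (2 + ε) * T ≤ T - lam := by
  rw [div_mul_eq_mul_div, div_le_iff₀ (by linarith)]
  nlinarith

private lemma aux_key (β ε : ℝ) (hβ : 2 < β) (hε : 0 < ε) :
    ∃ c : ℝ, 0 < c ∧ ∃ Λ : ℝ, 0 < Λ ∧
      ∀ lam : ℝ, Λ ≤ lam →
        ∀ u : ℝ → ℝ, ContDiff ℝ 2 u → MemLp u 2 (volume : Measure ℝ) →
          (∫ x : ℝ, u x ^ 2) = 1 →
          (∀ x : ℝ, -(deriv (deriv u) x) + |x| ^ β * u x = lam * u x) →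
          ∀ x : ℝ, ((1 + ε) * lam) ^ (1 / β) < x →
            u x ^ 2 ≤ Real.exp (-(2 * c * x ^ (1 + β / 2))) := by
  have hβ0 : (0:ℝ) < β := by linarith
  set p : ℝ := 1 + β / 2 with hp_def
  have hp2 : 2 < p := by simp [hp_def]; linarith
  have hp0 : 0 < p := by linarith
  have hp1 : (1:ℝ) ≤ p := by linarith
  set δ : ℝ := ε / (2 + ε) with hδ_def
  have hδ0 : 0 < δ := div_pos hε (by linarith)
  have hδ1 : δ < 1 := by rw [hδ_def, div_lt_one (by linarith)]; linarith
  set θ : ℝ := Real.sqrt δ with hθ_def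
  have hθ0 : 0 < θ := Real.sqrt_pos.mpr hδ0
  have hθsq : θ ^ 2 = δ := Real.sq_sqrt hδ0.le
  set q : ℝ := (1 + ε / 2) / (1 + ε) with hq_def
  have hq0 : 0 < q := div_pos (by linarith) (by linarith)
  have hq1 : q < 1 := by rw [hq_def, div_lt_one (by linarith)]; linarith
  set ρ : ℝ := q ^ (1 / β) with hρ_def
  have hρ0 : 0 < ρ := Real.rpow_pos_of_pos hq0 _
  have hρ1 : ρ < 1 := Real.rpow_lt_one hq0.le hq1 (by positivity)
  set ρ2 : ℝ := (1 + ρ) / 2 with hρ2_def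
  have hρρ2 : ρ < ρ2 := by rw [hρ2_def]; linarith
  have hρ21 : ρ2 < 1 := by rw [hρ2_def]; linarith
  have hρ20 : 0 < ρ2 := by linarith
  set r : ℝ := ρ2 ^ p with hr_def
  have hr0 : 0 < r := Real.rpow_pos_of_pos hρ20 _
  have hr1 : r < 1 := Real.rpow_lt_one hρ20.le hρ21 hp0
  refine ⟨θ / p * ((1 - r) / 4), mul_pos (div_pos hθ0 hp0) (by linarith), ?_⟩
  set c : ℝ := θ / p * ((1 - r) / 4) with hc_def
  set A : ℝ := max 1 (max ((1 / θ) ^ (2 / β))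
      (max (2 / (1 - ρ)) (max (2 * p / (1 - r)) (2 * ρ / (1 - ρ))))) with hA_def
  have hA1 : (1:ℝ) ≤ A := le_max_left _ _
  have hA0 : (0:ℝ) < A := by linarith
  refine ⟨A ^ β, Real.rpow_pos_of_pos hA0 _, ?_⟩
  intro lam hlam u hu huL2 hnorm hODE x hx
  -- basic positivity
  have hlam1 : (1:ℝ) ≤ lam := le_trans (Real.one_le_rpow hA1 hβ0.le) hlam
  have hlam0 : (0:ℝ) < lam := by linarith
  set a0 : ℝ := ((1 + ε / 2) * lam) ^ (1 / β) with ha0_def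
  set a : ℝ := ((1 + ε) * lam) ^ (1 / β) with ha_def
  have ha00 : 0 < a0 := Real.rpow_pos_of_pos (mul_pos (by linarith) hlam0) _
  have ha0 : 0 < a := Real.rpow_pos_of_pos (mul_pos (by linarith) hlam0) _
  have ha0A : A ≤ a0 := by
    have hAβ0 : 0 < A ^ β := Real.rpow_pos_of_pos hA0 _
    have h1 : A ^ β ≤ (1 + ε / 2) * lam := by nlinarith [hlam, hε, hAβ0]
    calc A = (A ^ β) ^ (1 / β) := by
          rw [← Real.rpow_mul hA0.le, mul_one_div_cancel hβ0.ne', Real.rpow_one]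
      _ ≤ a0 := Real.rpow_le_rpow hAβ0.le h1 (by positivity)
  -- thresholds
  have hthr1 : (1 / θ) ^ (2 / β) ≤ a0 :=
    le_trans (le_trans (le_max_left _ _) (le_max_right 1 _)) ha0A
  have hthr2 : 2 / (1 - ρ) ≤ a0 :=
    le_trans (le_trans (le_trans (le_max_left _ _) (le_max_right _ _)) (le_max_right 1 _)) ha0A
  have hthr3 : 2 * p / (1 - r) ≤ a0 :=
    le_trans (le_trans (le_trans (le_trans (le_max_left _ _) (le_max_right _ _))
      (le_max_right _ _)) (le_max_right 1 _)) ha0A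
  have hthr4 : 2 * ρ / (1 - ρ) ≤ a0 :=
    le_trans (le_trans (le_trans (le_trans (le_max_right _ _) (le_max_right _ _))
      (le_max_right _ _)) (le_max_right 1 _)) ha0A
  have ha01 : (1:ℝ) ≤ a0 := le_trans hA1 ha0A
  clear_value A c r ρ2 ρ θ q δ p
  have ha0a : a0 = ρ * a := by
    rw [ha0_def, ha_def, hρ_def, ← Real.mul_rpow hq0.le (mul_pos (by linarith) hlam0).le]
    congr 1
    rw [hq_def]; field_simp
  have ha0_le_a : a0 ≤ a := by
    calc a0 = ρ * a := ha0a
      _ ≤ 1 * a := mul_le_mul_of_nonneg_right hρ1.le ha0.le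
      _ = a := one_mul a
  have hx0 : 0 < x := lt_trans ha0 hx
  have hax : a ≤ x := hx.le
  have ha0x : a0 ≤ x := le_trans ha0_le_a hax
  have hgap : a0 + 2 ≤ a :=
    arith_gap ρ a a0 ha0a ((div_le_iff₀ (by linarith)).mp hthr4) hρ0
  set σ : ℝ := 1 / (θ * a0 ^ (β / 2)) with hσ_def
  have ha0β2 : 0 < a0 ^ (β / 2) := Real.rpow_pos_of_pos ha00 _
  have hσ0 : 0 < σ := by positivity
  have hσ1 : σ ≤ 1 := by
    rw [hσ_def, div_le_one (by positivity)]
    have h1 : 1 / θ ≤ a0 ^ (β / 2) := by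
      have he : 2 / β * (β / 2) = 1 := by field_simp
      calc 1 / θ = ((1 / θ) ^ (2 / β)) ^ (β / 2) := by
            rw [← Real.rpow_mul (by positivity), he, Real.rpow_one]
        _ ≤ a0 ^ (β / 2) := Real.rpow_le_rpow (by positivity) hthr1 (by positivity)
    calc (1:ℝ) = θ * (1 / θ) := by field_simp
      _ ≤ θ * a0 ^ (β / 2) := mul_le_mul_of_nonneg_left h1 hθ0.le
  have hpow_a0 : a0 ^ β = (1 + ε / 2) * lam := by
    rw [ha0_def, ← Real.rpow_mul (mul_pos (by linarith) hlam0).le,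
      one_div_mul_cancel hβ0.ne', Real.rpow_one]
  have hW : ∀ t, a0 ≤ t → δ * t ^ β ≤ t ^ β - lam := by
    intro t ht
    have h1 : (1 + ε / 2) * lam ≤ t ^ β := by
      rw [← hpow_a0]; exact Real.rpow_le_rpow ha00.le ht hβ0.le
    rw [hδ_def]
    exact arith_W ε lam _ hε hlam0 h1
  clear_value σ a a0
  -- derivative setup
  have hdiff : Differentiable ℝ u := hu.differentiable (by norm_num)
  have hC1 : ContDiff ℝ 1 (deriv u) :=
    ((contDiff_succ_iff_deriv (n := 1)).mp (by exact_mod_cast hu)).2.2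
  set du : ℝ → ℝ := deriv u with hdu_def
  set ddu : ℝ → ℝ := deriv du with hddu_def
  have hdu : ∀ t, HasDerivAt u (du t) t := fun t => (hdiff t).hasDerivAt
  have hddu : ∀ t, HasDerivAt du (ddu t) t := fun t =>
    ((hC1.differentiable one_ne_zero) t).hasDerivAt
  have hcont_u : Continuous u := hu.continuous
  have hcont_du : Continuous du := hC1.continuous
  have hODE' : ∀ t, ddu t = (|t| ^ β - lam) * u t := by
    intro t
    have h := hODE t
    linear_combination -h
  set w : ℝ → ℝ := fun t => u t ^ 2 with hw_def
  set dw : ℝ → ℝ := fun t => 2 * u t * du t with hdw_def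
  have hw : ∀ t, HasDerivAt w (dw t) t := by
    intro t
    simpa [hdw_def] using (hdu t).fun_pow 2
  have hderivw : deriv w = dw := funext fun t => (hw t).deriv
  set ddw : ℝ → ℝ := fun t => 2 * (du t * du t + u t * ddu t) with hddw_def
  have hdw : ∀ t, HasDerivAt dw (ddw t) t := by
    intro t
    have h := ((hdu t).mul (hddu t)).const_mul (2:ℝ)
    simpa [hdw_def, hddw_def, mul_assoc] using h
  have hderivdw : deriv dw = ddw := funext fun t => (hdw t).deriv
  have hcont_w : Continuous w := hcont_u.pow 2
  have hcont_dw : Continuous dw := (continuous_const.mul hcont_u).mul hcont_du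
  have hw_nonneg : ∀ t, 0 ≤ w t := fun t => sq_nonneg _
  have hint : Integrable w := huL2.integrable_sq
  have hddw_eq : ∀ t, a0 ≤ t → ddw t = 2 * (du t) ^ 2 + 2 * (t ^ β - lam) * w t := by
    intro t ht
    have ht0 : 0 < t := lt_of_lt_of_le ha00 ht
    have habs : |t| = t := abs_of_pos ht0
    show 2 * (du t * du t + u t * ddu t) = 2 * (du t) ^ 2 + 2 * (t ^ β - lam) * u t ^ 2
    rw [hODE' t, habs]
    ring
  have hWpos : ∀ t, a0 ≤ t → 0 ≤ t ^ β - lam := by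
    intro t ht
    have ht0 : 0 < t := lt_of_lt_of_le ha00 ht
    have h1 := hW t ht
    have h2 : 0 ≤ δ * t ^ β := mul_nonneg hδ0.le (Real.rpow_nonneg ht0.le β)
    linarith
  have hddw_nonneg : ∀ t ∈ interior (Ici a0), 0 ≤ deriv dw t := by
    intro t ht
    rw [interior_Ici] at ht
    have ht' : a0 ≤ t := le_of_lt ht
    rw [hderivdw, hddw_eq t ht']
    have h2 : 0 ≤ 2 * (t ^ β - lam) * w t :=
      mul_nonneg (by linarith [hWpos t ht']) (hw_nonneg t)
    have h3 : 0 ≤ 2 * (du t) ^ 2 := by positivity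
    linarith
  have hdw_nonpos : ∀ t, a0 ≤ t → dw t ≤ 0 := by
    intro x1 hx1
    by_contra hpos
    push_neg at hpos
    have hmono_dw : MonotoneOn dw (Ici a0) :=
      monotoneOn_of_deriv_nonneg (convex_Ici _) hcont_dw.continuousOn
        (fun t _ => (hdw t).differentiableAt.differentiableWithinAt) hddw_nonneg
    have hgrow : ∀ t, x1 ≤ t → w x1 + dw x1 * (t - x1) ≤ w t := by
      intro t ht
      have hmono : MonotoneOn (fun s => w s - dw x1 * s) (Ici x1) := by
        apply monotoneOn_of_deriv_nonneg (convex_Ici _)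
        · exact (hcont_w.sub (continuous_const.mul continuous_id)).continuousOn
        · intro s _
          exact ((hw s).sub ((hasDerivAt_id s).const_mul (dw x1))).differentiableAt.differentiableWithinAt
        · intro s hs
          rw [interior_Ici] at hs
          have hD : HasDerivAt (fun s => w s - dw x1 * s) (dw s - dw x1 * 1) s :=
            (hw s).sub ((hasDerivAt_id s).const_mul (dw x1))
          rw [hD.deriv]
          have h5 := hmono_dw (mem_Ici.mpr hx1) (mem_Ici.mpr (le_trans hx1 hs.le)) hs.le
          simp only [mul_one]
          linarith
      have h6 := hmono (mem_Ici.mpr le_rfl) (mem_Ici.mpr ht) ht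
      simp only at h6
      linarith
    refine aux_not_integrable w hint (dw x1) (x1 + 1) hpos ?_
    intro t ht
    have h1 := hgrow t (by linarith)
    have h2 : dw x1 * 1 ≤ dw x1 * (t - x1) :=
      mul_le_mul_of_nonneg_left (by linarith) hpos.le
    have h3 := hw_nonneg x1
    linarith
  have hanti : AntitoneOn w (Ici a0) := by
    apply antitoneOn_of_deriv_nonpos (convex_Ici _) hcont_w.continuousOn
      (fun s _ => (hw s).differentiableAt.differentiableWithinAt)
    intro s hs
    rw [interior_Ici] at hs
    rw [hderivw]
    exact hdw_nonpos s hs.le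
  have hws1 : w (a0 + 1) ≤ 1 := by
    have hmem : ∀ t ∈ Icc a0 (a0 + 1), w (a0 + 1) ≤ w t := fun t ht =>
      hanti (mem_Ici.mpr ht.1) (mem_Ici.mpr (by linarith)) ht.2
    have hconst : ∫ t in Icc a0 (a0 + 1), w (a0 + 1) = w (a0 + 1) := by
      rw [setIntegral_const, Real.volume_real_Icc]
      simp
    have h2 : w (a0 + 1) ≤ ∫ t in Icc a0 (a0 + 1), w t := by
      rw [← hconst]
      exact setIntegral_mono_on (integrableOn_const measure_Icc_lt_top.ne)
        hint.integrableOn measurableSet_Icc hmem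
    have h3 : ∫ t in Icc a0 (a0 + 1), w t ≤ ∫ t, w t :=
      setIntegral_le_integral hint (Filter.Eventually.of_forall hw_nonneg)
    rw [hnorm] at h3
    linarith
  -- case split on w x
  rcases eq_or_lt_of_le (hw_nonneg x) with h0 | hwx
  · show u x ^ 2 ≤ _
    have : u x ^ 2 = w x := rfl
    rw [this, ← h0]
    exact (Real.exp_pos _).le
  have hwpos : ∀ t ∈ Icc a0 x, 0 < w t := fun t ht =>
    lt_of_lt_of_le hwx (hanti (mem_Ici.mpr ht.1) (mem_Ici.mpr ha0x) ht.2)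
  set v : ℝ → ℝ := fun t => -(dw t / w t) with hv_def
  have hv0 : ∀ t ∈ Icc a0 x, 0 ≤ v t := by
    intro t ht
    have h1 := hdw_nonpos t ht.1
    have h2 := hwpos t ht
    exact neg_nonneg.mpr (div_nonpos_of_nonpos_of_nonneg h1 h2.le)
  have hvd : ∀ t ∈ Icc a0 x, HasDerivAt v ((v t) ^ 2 - ddw t / w t) t := by
    intro t ht
    have hwt : w t ≠ 0 := (hwpos t ht).ne'
    have h : HasDerivAt v (-((ddw t * w t - dw t * dw t) / w t ^ 2)) t :=
      ((hdw t).fun_div (hw t) hwt).fun_neg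
    convert h using 1
    show (v t) ^ 2 - ddw t / w t = -((ddw t * w t - dw t * dw t) / w t ^ 2)
    have hv : v t = -(dw t / w t) := rfl
    rw [hv]
    field_simp
    ring
  have hvcont : ContinuousOn v (Icc a0 x) :=
    ((hcont_dw.continuousOn).div (hcont_w.continuousOn) (fun t ht => (hwpos t ht).ne')).neg
  have hux2 : u x ^ 2 = w x := rfl
  have hvdw : ∀ t, dw t / w t = -(v t) := fun t => (neg_neg _).symm
  clear_value v ddw dw w ddu du
  have hric : ∀ t ∈ Icc a0 x, 2 * δ * t ^ β ≤ ddw t / w t := by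
    intro t ht
    have hwt := hwpos t ht
    rw [le_div_iff₀ hwt, hddw_eq t ht.1]
    have h1 := hW t ht.1
    have h2 := hw_nonneg t
    have h3 : 2 * δ * t ^ β * w t ≤ 2 * (t ^ β - lam) * w t :=
      mul_le_mul_of_nonneg_right (by linarith) h2
    have h4 : 0 ≤ 2 * du t ^ 2 := by positivity
    linarith
  have hsqpow : ∀ t : ℝ, 0 < t → t ^ (β / 2) * t ^ (β / 2) = t ^ β := by
    intro t ht
    rw [← Real.rpow_add ht]
    congr 1
    ring
  have hvsq : ∀ t, 0 < t → 0 ≤ v t → v t < θ * t ^ (β / 2) → (v t) ^ 2 ≤ δ * t ^ β := by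
    intro t ht hv hvub
    calc (v t) ^ 2 ≤ (θ * t ^ (β / 2)) ^ 2 := pow_le_pow_left₀ hv hvub.le 2
      _ = θ ^ 2 * (t ^ (β / 2) * t ^ (β / 2)) := by ring
      _ = δ * t ^ β := by rw [hθsq, hsqpow t ht]
  -- barrier claim
  have hbar : ∀ t1, a0 ≤ t1 → t1 + σ ≤ x → θ * t1 ^ (β / 2) ≤ v t1 := by
    intro t1 ht1 ht1σ
    by_contra hlt
    push_neg at hlt
    have ht10 : 0 < t1 := lt_of_lt_of_le ha00 ht1
    have hsub : Icc t1 (t1 + σ) ⊆ Icc a0 x := fun t ht =>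
      ⟨le_trans ht1 ht.1, le_trans ht.2 ht1σ⟩
    have hub : ∀ t ∈ Icc t1 (t1 + σ), v t < θ * t ^ (β / 2) := by
      by_contra hS
      push_neg at hS
      obtain ⟨t2, ht2, ht2'⟩ := hS
      set φ : ℝ → ℝ := fun t => v t - θ * t ^ (β / 2) with hφ_def
      have hsub2 : Icc t1 t2 ⊆ Icc t1 (t1 + σ) := Icc_subset_Icc le_rfl ht2.2
      have hφcont : ContinuousOn φ (Icc t1 t2) :=
        (hvcont.mono (subset_trans hsub2 hsub)).sub
          (continuous_const.mul (Real.continuous_rpow_const (by positivity))).continuousOn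
      set S : Set ℝ := Icc t1 t2 ∩ φ ⁻¹' (Ici 0) with hS_def
      have hScl : IsClosed S :=
        hφcont.preimage_isClosed_of_isClosed isClosed_Icc isClosed_Ici
      have hSne : S.Nonempty := ⟨t2, ⟨ht2.1, le_rfl⟩, sub_nonneg.mpr ht2'⟩
      have hSbdd : BddBelow S := ⟨t1, fun y hy => hy.1.1⟩
      set t3 := sInf S with ht3_def
      have ht3S : t3 ∈ S := hScl.csInf_mem hSne hSbdd
      have ht3mem : t3 ∈ Icc t1 t2 := ht3S.1
      have hφt3 : 0 ≤ φ t3 := ht3S.2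
      have hφt1 : φ t1 < 0 := sub_neg.mpr hlt
      have ht13 : t1 < t3 := by
        rcases lt_or_eq_of_le ht3mem.1 with h | h
        · exact h
        · exfalso
          rw [← h] at hφt3
          linarith
      have hlow : ∀ t ∈ Ico t1 t3, φ t < 0 := by
        intro t ht
        by_contra hc
        push_neg at hc
        have : t3 ≤ t := csInf_le hSbdd ⟨⟨ht.1, le_trans ht.2.le ht3mem.2⟩, hc⟩
        exact absurd ht.2 (not_lt.mpr this)
      have hstrict : StrictAntiOn φ (Icc t1 t3) := by
        apply strictAntiOn_of_deriv_neg (convex_Icc _ _)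
          (hφcont.mono (Icc_subset_Icc le_rfl ht3mem.2))
        intro t ht
        rw [interior_Icc] at ht
        have htmem : t ∈ Icc a0 x := hsub (hsub2 ⟨ht.1.le, le_trans ht.2.le ht3mem.2⟩)
        have ht0 : 0 < t := lt_of_lt_of_le ha00 htmem.1
        have hDrpow : HasDerivAt (fun s : ℝ => θ * s ^ (β / 2)) (θ * (β / 2 * t ^ (β / 2 - 1))) t :=
          (Real.hasDerivAt_rpow_const (Or.inl ht0.ne')).const_mul θ
        have hDφ : HasDerivAt φ ((v t) ^ 2 - ddw t / w t - θ * (β / 2 * t ^ (β / 2 - 1))) t :=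
          (hvd t htmem).sub hDrpow
        rw [hDφ.deriv]
        have hvt : 0 ≤ v t := hv0 t htmem
        have hφneg : φ t < 0 := hlow t ⟨ht.1.le, ht.2⟩
        have hvub : v t < θ * t ^ (β / 2) := sub_neg.mp hφneg
        have hsq1 : (v t) ^ 2 ≤ δ * t ^ β := hvsq t ht0 hvt hvub
        have hr2 := hric t htmem
        have hrpos : 0 < θ * (β / 2 * t ^ (β / 2 - 1)) :=
          mul_pos hθ0 (mul_pos (by linarith) (Real.rpow_pos_of_pos ht0 _))
        have hδt : 0 < δ * t ^ β := mul_pos hδ0 (Real.rpow_pos_of_pos ht0 _)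
        linarith only [hsq1, hr2, hrpos, hδt]
      have hcontr := hstrict ⟨le_rfl, ht13.le⟩ ⟨ht13.le, le_rfl⟩ ht13
      linarith
    -- linear decay of v on [t1, t1+σ]
    have hvt1σ : v (t1 + σ) ≤ v t1 - δ * t1 ^ β * σ := by
      have hmono : AntitoneOn (fun t => v t + δ * t1 ^ β * t) (Icc t1 (t1 + σ)) := by
        apply antitoneOn_of_deriv_nonpos (convex_Icc _ _)
        · exact (hvcont.mono hsub).add
            ((continuous_const.mul continuous_id).continuousOn)
        · intro t ht
          rw [interior_Icc] at ht
          have htmem : t ∈ Icc a0 x := hsub ⟨ht.1.le, ht.2.le⟩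
          have hD : HasDerivAt (fun t => v t + δ * t1 ^ β * t)
              ((v t) ^ 2 - ddw t / w t + δ * t1 ^ β * 1) t :=
            (hvd t htmem).add ((hasDerivAt_id t).const_mul (δ * t1 ^ β))
          exact hD.differentiableAt.differentiableWithinAt
        · intro t ht
          rw [interior_Icc] at ht
          have htmem : t ∈ Icc a0 x := hsub ⟨ht.1.le, ht.2.le⟩
          have ht0 : 0 < t := lt_of_lt_of_le ha00 htmem.1
          have hD : HasDerivAt (fun t => v t + δ * t1 ^ β * t)
              ((v t) ^ 2 - ddw t / w t + δ * t1 ^ β * 1) t :=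
            (hvd t htmem).add ((hasDerivAt_id t).const_mul (δ * t1 ^ β))
          rw [hD.deriv]
          have hvt : 0 ≤ v t := hv0 t htmem
          have hvub : v t < θ * t ^ (β / 2) := hub t ⟨ht.1.le, ht.2.le⟩
          have hsq1 : (v t) ^ 2 ≤ δ * t ^ β := hvsq t ht0 hvt hvub
          have hr2 := hric t htmem
          have hmr : t1 ^ β ≤ t ^ β := Real.rpow_le_rpow ht10.le ht.1.le hβ0.le
          have h9 : δ * t1 ^ β ≤ δ * t ^ β := mul_le_mul_of_nonneg_left hmr hδ0.le
          linarith only [hsq1, hr2, h9]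
      have h7 := hmono ⟨le_rfl, by linarith⟩ ⟨by linarith, le_rfl⟩ (by linarith)
      simp only at h7
      linarith
    have hvend : 0 ≤ v (t1 + σ) := hv0 _ ⟨by linarith, ht1σ⟩
    have hlow2 : θ * t1 ^ (β / 2) ≤ δ * t1 ^ β * σ := by
      have h9 : a0 ^ (β / 2) ≤ t1 ^ (β / 2) :=
        Real.rpow_le_rpow ha00.le ht1 (by positivity)
      have hθa : 0 < θ * a0 ^ (β / 2) := mul_pos hθ0 ha0β2
      rw [hσ_def, mul_one_div, le_div_iff₀ hθa]
      calc θ * t1 ^ (β / 2) * (θ * a0 ^ (β / 2))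
          = θ ^ 2 * (t1 ^ (β / 2) * a0 ^ (β / 2)) := by ring
        _ ≤ θ ^ 2 * (t1 ^ (β / 2) * t1 ^ (β / 2)) := by
            apply mul_le_mul_of_nonneg_left _ (sq_nonneg θ)
            exact mul_le_mul_of_nonneg_left h9 (Real.rpow_nonneg ht10.le _)
        _ = δ * t1 ^ β := by rw [hθsq, hsqpow t1 ht10]
    linarith only [hlt, hvt1σ, hvend, hlow2]
  -- final decay estimate
  set s1 : ℝ := a0 + 1 with hs1_def
  clear_value s1
  have hxσ_1 : s1 ≤ x - σ := by linarith only [hs1_def, hgap, hax, hσ1]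
  have hs10 : 0 < s1 := by linarith only [hs1_def, ha00]
  have hsubF : Icc s1 (x - σ) ⊆ Icc a0 x := fun t ht =>
    ⟨by linarith only [ht.1, hs1_def], by linarith only [ht.2, hσ0]⟩
  have hF : AntitoneOn (fun t => Real.log (w t) + θ / p * t ^ p) (Icc s1 (x - σ)) := by
    apply antitoneOn_of_deriv_nonpos (convex_Icc _ _)
    · apply ContinuousOn.add
      · exact ContinuousOn.log (hcont_w.continuousOn.mono (subset_univ _)) (fun t ht => (hwpos t (hsubF ht)).ne')
      · exact (continuous_const.mul (Real.continuous_rpow_const hp0.le)).continuousOn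
    · intro t ht
      rw [interior_Icc] at ht
      have htmem : t ∈ Icc a0 x := hsubF ⟨ht.1.le, ht.2.le⟩
      have ht0 : 0 < t := lt_of_lt_of_le ha00 htmem.1
      have hD : HasDerivAt (fun t => Real.log (w t) + θ / p * t ^ p)
          (dw t / w t + θ / p * (p * t ^ (p - 1))) t :=
        ((hw t).log (hwpos t htmem).ne').add
          ((Real.hasDerivAt_rpow_const (Or.inl ht0.ne')).const_mul (θ / p))
      exact hD.differentiableAt.differentiableWithinAt
    · intro t ht
      rw [interior_Icc] at ht
      have htmem : t ∈ Icc a0 x := hsubF ⟨ht.1.le, ht.2.le⟩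
      have ht0 : 0 < t := lt_of_lt_of_le ha00 htmem.1
      have hD : HasDerivAt (fun t => Real.log (w t) + θ / p * t ^ p)
          (dw t / w t + θ / p * (p * t ^ (p - 1))) t :=
        ((hw t).log (hwpos t htmem).ne').add
          ((Real.hasDerivAt_rpow_const (Or.inl ht0.ne')).const_mul (θ / p))
      rw [hD.deriv, hvdw t]
      have hb := hbar t htmem.1 (by linarith only [ht.2])
      have hexp : θ / p * (p * t ^ (p - 1)) = θ * t ^ (β / 2) := by
        have he1 : p - 1 = β / 2 := by rw [hp_def]; ring
        rw [he1]
        field_simp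
      rw [hexp]
      linarith only [hb]
  have hFapp := hF ⟨le_rfl, hxσ_1⟩ ⟨hxσ_1, le_rfl⟩ hxσ_1
  simp only at hFapp
  have hlogs : Real.log (w s1) ≤ 0 := Real.log_nonpos (hw_nonneg s1) hws1
  -- numeric estimates
  have hxp0 : 0 < x ^ p := Real.rpow_pos_of_pos hx0 _
  have hs1ρ2 : s1 ≤ ρ2 * x := by
    have h2 : (0:ℝ) < 1 - ρ := by linarith only [hρ1]
    have h3 : 2 ≤ a0 * (1 - ρ) := by
      rw [div_le_iff₀ h2] at hthr2
      linarith only [hthr2]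
    have h1 : a0 ≤ ρ * x := by
      rw [ha0a]
      exact mul_le_mul_of_nonneg_left hax hρ0.le
    have h4 : (1 - ρ) * a0 ≤ (1 - ρ) * x := mul_le_mul_of_nonneg_left ha0x h2.le
    rw [hρ2_def]
    linarith only [h1, h3, h4, hs1_def]
  have hsp : s1 ^ p ≤ r * x ^ p := by
    calc s1 ^ p ≤ (ρ2 * x) ^ p := Real.rpow_le_rpow hs10.le hs1ρ2 hp0.le
      _ = ρ2 ^ p * x ^ p := Real.mul_rpow hρ20.le hx0.le
      _ = r * x ^ p := by rw [← hr_def]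
  have hxσpos : 0 < x - σ := lt_of_lt_of_le hs10 hxσ_1
  have hG : AntitoneOn (fun t => t ^ p - p * x ^ (p - 1) * t) (Icc (x - σ) x) := by
    apply antitoneOn_of_deriv_nonpos (convex_Icc _ _)
    · exact ((Real.continuous_rpow_const hp0.le).continuousOn).sub
        (continuous_const.mul continuous_id).continuousOn
    · intro t ht
      rw [interior_Icc] at ht
      have ht0 : 0 < t := lt_trans hxσpos ht.1
      exact ((Real.hasDerivAt_rpow_const (Or.inl ht0.ne')).sub
        ((hasDerivAt_id t).const_mul (p * x ^ (p - 1)))).differentiableAt.differentiableWithinAt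
    · intro t ht
      rw [interior_Icc] at ht
      have ht0 : 0 < t := lt_trans hxσpos ht.1
      have hD : HasDerivAt (fun t : ℝ => t ^ p - p * x ^ (p - 1) * t)
          (p * t ^ (p - 1) - p * x ^ (p - 1) * 1) t :=
        (Real.hasDerivAt_rpow_const (Or.inl ht0.ne')).sub
          ((hasDerivAt_id t).const_mul (p * x ^ (p - 1)))
      rw [hD.deriv]
      have h7 : t ^ (p - 1) ≤ x ^ (p - 1) :=
        Real.rpow_le_rpow ht0.le ht.2.le (by linarith only [hp1])
      have h8 : p * t ^ (p - 1) ≤ p * x ^ (p - 1) := mul_le_mul_of_nonneg_left h7 hp0.le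
      simp only [mul_one]
      linarith only [h8]
  have hGapp := hG ⟨le_rfl, by linarith only [hσ0]⟩ ⟨by linarith only [hσ0], le_rfl⟩
    (by linarith only [hσ0])
  simp only at hGapp
  have hN2 : x ^ p - p * x ^ (p - 1) * σ ≤ (x - σ) ^ p := by linarith only [hGapp]
  have hxp1 : x ^ (p - 1) * x = x ^ p := by
    rw [← Real.rpow_add_one hx0.ne' (p - 1)]
    congr 1
    ring
  have hpx : p ≤ (1 - r) / 2 * x := by
    have h2 : (0:ℝ) < 1 - r := by linarith only [hr1]
    have h3 : 2 * p ≤ a0 * (1 - r) := by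
      rw [div_le_iff₀ h2] at hthr3
      linarith only [hthr3]
    have h4 : a0 * (1 - r) ≤ x * (1 - r) := mul_le_mul_of_nonneg_right ha0x h2.le
    linarith only [h3, h4]
  have hN3 : p * x ^ (p - 1) * σ ≤ (1 - r) / 2 * x ^ p := by
    have h5 : 0 ≤ x ^ (p - 1) := Real.rpow_nonneg hx0.le _
    calc p * x ^ (p - 1) * σ ≤ p * x ^ (p - 1) * 1 :=
          mul_le_mul_of_nonneg_left hσ1 (mul_nonneg hp0.le h5)
      _ = p * x ^ (p - 1) := mul_one _
      _ ≤ (1 - r) / 2 * x * x ^ (p - 1) := mul_le_mul_of_nonneg_right hpx h5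
      _ = (1 - r) / 2 * x ^ p := by rw [mul_assoc, mul_comm x (x ^ (p - 1)), hxp1]
  have hnum : 2 * c * x ^ p ≤ θ / p * ((x - σ) ^ p - s1 ^ p) := by
    have h9 : (1 - r) / 2 * x ^ p ≤ (x - σ) ^ p - s1 ^ p := by
      linarith only [hN2, hN3, hsp]
    have hθp : 0 ≤ θ / p := le_of_lt (div_pos hθ0 hp0)
    have h10 : θ / p * ((1 - r) / 2 * x ^ p) ≤ θ / p * ((x - σ) ^ p - s1 ^ p) :=
      mul_le_mul_of_nonneg_left h9 hθp
    have h11 : 2 * c * x ^ p = θ / p * ((1 - r) / 2 * x ^ p) := by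
      rw [hc_def]
      ring
    linarith only [h10, h11]
  have hwxx : w x ≤ w (x - σ) :=
    hanti (mem_Ici.mpr (by linarith only [hxσ_1, hs1_def] : a0 ≤ x - σ))
      (mem_Ici.mpr ha0x) (by linarith only [hσ0])
  have hwxσpos : 0 < w (x - σ) :=
    hwpos _ ⟨by linarith only [hxσ_1, hs1_def], by linarith only [hσ0]⟩
  have hlogxσ : Real.log (w (x - σ)) ≤ -(2 * c * x ^ p) := by
    linarith only [hFapp, hlogs, hnum]
  calc u x ^ 2 = w x := hux2
    _ ≤ w (x - σ) := hwxx
    _ = Real.exp (Real.log (w (x - σ))) := (Real.exp_log hwxσpos).symm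
    _ ≤ Real.exp (-(2 * c * x ^ p)) := Real.exp_le_exp.mpr hlogxσ

/-- Pointwise exponential decay of normalized eigenfunctions of the anharmonic oscillator
`T = -d²/dx² + |x|^β` beyond the turning points. -/
theorem stmt_14 (β ε : ℝ) (hβ : 2 < β) (hε : 0 < ε) :
    ∃ c : ℝ, 0 < c ∧ ∃ Λ : ℝ, 0 < Λ ∧
      ∀ lam : ℝ, Λ ≤ lam →
        ∀ u : ℝ → ℝ, ContDiff ℝ 2 u → MemLp u 2 (volume : Measure ℝ) →
          (∫ x : ℝ, u x ^ 2) = 1 →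
          (∀ x : ℝ, -(deriv (deriv u) x) + |x| ^ β * u x = lam * u x) →
          ∀ x : ℝ, ((1 + ε) * lam) ^ (1 / β) < |x| →
            u x ^ 2 ≤ Real.exp (-(2 * c * |x| ^ (1 + β / 2))) := by
  obtain ⟨c, hc, Λ, hΛ, hmain⟩ := aux_key β ε hβ hε
  refine ⟨c, hc, Λ, hΛ, ?_⟩
  intro lam hlam u hu huL2 hnorm hODE x hxgt
  have hlam0 : 0 < lam := lt_of_lt_of_le hΛ hlam
  rcases lt_trichotomy x 0 with hx | hx | hx
  · -- x < 0 : reflect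
    set u2 : ℝ → ℝ := fun y => u (-y) with hu2_def
    have hu2c : ContDiff ℝ 2 u2 := hu.comp contDiff_neg
    have hu2L2 : MemLp u2 2 (volume : Measure ℝ) :=
      huL2.comp_measurePreserving (Measure.measurePreserving_neg (volume : Measure ℝ))
    have hnorm2 : (∫ y : ℝ, u2 y ^ 2) = 1 := by
      have h := integral_neg_eq_self (fun z : ℝ => u z ^ 2) (volume : Measure ℝ)
      exact h.trans hnorm
    have hder : deriv u2 = fun y => -deriv u (-y) := by
      funext y
      exact deriv_comp_neg (f := u) (x := y)
    have hODE2 : ∀ y : ℝ, -(deriv (deriv u2) y) + |y| ^ β * u2 y = lam * u2 y := by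
      intro y
      have h1 : deriv (deriv u2) y = deriv (deriv u) (-y) := by
        rw [hder]
        have h2 : deriv (fun y : ℝ => -deriv u (-y)) y
            = -(deriv (fun y : ℝ => deriv u (-y)) y) := deriv.neg
        rw [h2, deriv_comp_neg (f := deriv u) (x := y), neg_neg]
      rw [h1]
      have h3 := hODE (-y)
      rw [abs_neg] at h3
      exact h3
    have key := hmain lam hlam u2 hu2c hu2L2 hnorm2 hODE2 (-x)
      (by rwa [abs_of_neg hx] at hxgt)
    rw [abs_of_neg hx]
    simpa [hu2_def, neg_neg] using key
  · exfalso
    rw [hx] at hxgt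
    simp only [abs_zero] at hxgt
    have h0 : 0 ≤ ((1 + ε) * lam) ^ (1 / β) :=
      Real.rpow_nonneg (mul_nonneg (by linarith) hlam0.le) _
    linarith
  · have key := hmain lam hlam u hu huL2 hnorm hODE x
      (by rwa [abs_of_pos hx] at hxgt)
    rwa [abs_of_pos hx]
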